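/- Let (X_α)_{α ∈ A} be a family of topological spaces, X := ∏_{α ∈ A} X_α with the product topology, and Y a topological space. For each α ∈ A let K_α ⊆ X_α be a quasi-compact subset, and set K := ∏_{α ∈ A} K_α. Let f : X → Y be a map such that f|_C is continuous for every quasi-compact subset C ⊆ X, let x = (x_α)_{α ∈ A} ∈ K, let W ⊆ Y be a closed set, and let F ⊆ A be a finite subset such that Σ_F(K) ⊆ f⁻¹(W), where Σ_F(K) denotes the set of all y = (y_α)_{α ∈ A} ∈ X for which Supp_K(y) := {α ∈ A : y_α ∉ K_α} is finite and disjoint from F. Then every y ∈ X with y_α ∈ K_α for all α ∈ F satisfies f(y) ∈ W; that is, ∏_{α ∈ F} K_α × ∏_{α ∈ A∖F} X_α ⊆ f⁻¹(W). -/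
import Mathlib


theorem sigma_subset_preimage_implies_box_subset_preimage
    {A : Type*} {X : A → Type*} [∀ α, TopologicalSpace (X α)]
    {Y : Type*} [TopologicalSpace Y]
    (K : ∀ α, Set (X α)) (hKq : ∀ α, IsCompact (K α))
    (f : (∀ α, X α) → Y)
    (hf : ∀ C : Set (∀ α, X α), IsCompact C → ContinuousOn f C)
    (x : ∀ α, X α) (hx : ∀ α, x α ∈ K α)
    (W : Set Y) (hW : IsClosed W)
    (F : Finset A)
    (hSigma : ∀ y : ∀ α, X α, {α | y α ∉ K α}.Finite →
      {α | y α ∉ K α} ∩ (F : Set A) = ∅ → f y ∈ W) :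
    ∀ y : ∀ α, X α, (∀ α ∈ F, y α ∈ K α) → f y ∈ W := by
  intro y hy
  classical
  -- compact set containing y and all approximants
  set C : Set (∀ α, X α) := Set.pi Set.univ (fun α => {x α, y α}) with hC
  have hCc : IsCompact C := isCompact_univ_pi fun α => ((Set.finite_singleton (y α)).insert (x α)).isCompact
  have hyC : y ∈ C := fun α _ => Or.inr rfl
  -- approximants
  set z : Finset A → ∀ α, X α := fun S α => if α ∈ S ∪ F then y α else x α with hz
  have hzC : ∀ S, z S ∈ C := by
    intro S α _
    by_cases h : α ∈ S ∪ F
    · right; simp [hz, Finset.mem_union.mp h]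
    · left
      have h' := h
      rw [Finset.mem_union, not_or] at h'
      simp [hz, h'.1, h'.2]
  have hzW : ∀ S, f (z S) ∈ W := by
    intro S
    apply hSigma
    · apply Set.Finite.subset S.finite_toSet
      intro α hα
      simp only [Set.mem_setOf_eq, hz] at hα
      by_cases h : α ∈ S ∪ F
      · rcases Finset.mem_union.mp h with h' | h'
        · exact h'
        · exact absurd (hy α h') (by simpa [h] using hα)
      · exact absurd (hx α) (by simpa [h] using hα)
    · ext α
      simp only [Set.mem_inter_iff, Set.mem_setOf_eq, hz, Finset.coe_mem, Set.mem_empty_iff_false,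
        iff_false, not_and, Finset.mem_coe]
      intro hα hαF
      exact hα (by simp [Finset.mem_union, hαF, hy α hαF])
  -- z S → y
  have htend : Filter.Tendsto z Filter.atTop (nhds y) := by
    rw [tendsto_pi_nhds]
    intro α
    apply Filter.Tendsto.congr' _ (tendsto_const_nhds (x := y α))
    filter_upwards [Filter.eventually_ge_atTop ({α} : Finset A)] with S hS
    have : α ∈ S ∪ F := Finset.mem_union_left _ (hS (Finset.mem_singleton_self α))
    simp [hz, Finset.mem_union.mp this]
  have htendC : Filter.Tendsto z Filter.atTop (nhdsWithin y C) :=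
    tendsto_nhdsWithin_of_tendsto_nhds_of_eventually_within z htend
      (Filter.Eventually.of_forall hzC)
  have := (hf C hCc y hyC).tendsto.comp htendC
  exact hW.mem_of_tendsto this (Filter.Eventually.of_forall hzW)
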